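/- arXiv:q-alg/9604017 — 4 statements merged into one kernel-verified Lean document; each statement's English description precedes it below -/
import Mathlib

section
/- Let G = ℂ[ℤ/p] with projectors P^r, and define R = Σ_{r,s=0}^{p-1} q^{rs} P^r ⊗ P^s ∈ G ⊗ G. Then R is invertible with inverse R^{-1} = Σ_{r,s} q^{-rs} P^r ⊗ P^s, and R satisfies the Yang–Baxter equation R₁₂ R₁₃ R₂₃ = R₂₃ R₁₃ R₁₂ in G ⊗ G ⊗ G. -/
open Finset TensorProduct

noncomputable section

/-- The group algebra `ℂ[ℤ/p]`. -/
abbrev Gp (p : ℕ) := MonoidAlgebra ℂ (Multiplicative (ZMod p))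

/-- The canonical generator `g` of `ℂ[ℤ/p]`. -/
noncomputable def gp (p : ℕ) : Gp p :=
  MonoidAlgebra.of ℂ (Multiplicative (ZMod p)) (Multiplicative.ofAdd 1)

/-- `q = exp(2πi/p)`. -/
noncomputable def qp (p : ℕ) : ℂ := Complex.exp (2 * Real.pi * Complex.I / p)

/-- The projector `P^r = (1/p) ∑_{s<p} q^{-rs} g^s`. -/
noncomputable def Pp (p : ℕ) (r : ℕ) : Gp p :=
  (p : ℂ)⁻¹ • ∑ s ∈ Finset.range p, (qp p ^ (r * s))⁻¹ • gp p ^ s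

/-- The `R`-matrix `R = ∑_{r,s} q^{rs} P^r ⊗ P^s ∈ G ⊗ G`. -/
noncomputable def Rp (p : ℕ) : Gp p ⊗[ℂ] Gp p :=
  ∑ r ∈ Finset.range p, ∑ s ∈ Finset.range p,
    qp p ^ (r * s) • (Pp p r ⊗ₜ[ℂ] Pp p s)

/-- The candidate inverse `∑_{r,s} q^{-rs} P^r ⊗ P^s`. -/
noncomputable def RpInv (p : ℕ) : Gp p ⊗[ℂ] Gp p :=
  ∑ r ∈ Finset.range p, ∑ s ∈ Finset.range p,
    (qp p ^ (r * s))⁻¹ • (Pp p r ⊗ₜ[ℂ] Pp p s)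

/-- `R₁₂ ∈ G ⊗ G ⊗ G`. -/
noncomputable def Rp12 (p : ℕ) : Gp p ⊗[ℂ] (Gp p ⊗[ℂ] Gp p) :=
  ∑ r ∈ Finset.range p, ∑ s ∈ Finset.range p,
    qp p ^ (r * s) • (Pp p r ⊗ₜ[ℂ] (Pp p s ⊗ₜ[ℂ] (1 : Gp p)))

/-- `R₁₃ ∈ G ⊗ G ⊗ G`. -/
noncomputable def Rp13 (p : ℕ) : Gp p ⊗[ℂ] (Gp p ⊗[ℂ] Gp p) :=
  ∑ r ∈ Finset.range p, ∑ s ∈ Finset.range p,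
    qp p ^ (r * s) • (Pp p r ⊗ₜ[ℂ] ((1 : Gp p) ⊗ₜ[ℂ] Pp p s))

/-- `R₂₃ ∈ G ⊗ G ⊗ G`. -/
noncomputable def Rp23 (p : ℕ) : Gp p ⊗[ℂ] (Gp p ⊗[ℂ] Gp p) :=
  ∑ r ∈ Finset.range p, ∑ s ∈ Finset.range p,
    qp p ^ (r * s) • ((1 : Gp p) ⊗ₜ[ℂ] (Pp p r ⊗ₜ[ℂ] Pp p s))

set_option linter.unusedSectionVars false

namespace Stmt2Aux

variable (p : ℕ) [NeZero p]

lemma hζ : IsPrimitiveRoot (qp p) p := Complex.isPrimitiveRoot_exp p (NeZero.ne p)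

noncomputable def χ (a : ZMod p) : ℂ := qp p ^ a.val

lemma ζ_pow_mod (n : ℕ) : qp p ^ (n % p) = qp p ^ n :=
  (pow_eq_pow_mod n (hζ p).pow_eq_one).symm

lemma χ_natCast (n : ℕ) : χ p (n : ZMod p) = qp p ^ n := by
  unfold χ; rw [ZMod.val_natCast, ζ_pow_mod]

lemma χ_zero : χ p 0 = 1 := by
  have := χ_natCast p 0
  simpa using this

lemma χ_add (a b : ZMod p) : χ p (a + b) = χ p a * χ p b := by
  unfold χ
  rw [ZMod.val_add, ζ_pow_mod, pow_add]

lemma χ_ne_zero (a : ZMod p) : χ p a ≠ 0 := by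
  unfold χ qp
  exact pow_ne_zero _ (Complex.exp_ne_zero _)

lemma χ_inv (a : ZMod p) : (χ p a)⁻¹ = χ p (-a) := by
  symm
  refine eq_inv_of_mul_eq_one_left ?_
  rw [← χ_add, neg_add_cancel, χ_zero]

lemma χ_eq_one_iff (a : ZMod p) : χ p a = 1 ↔ a = 0 := by
  unfold χ
  rw [(hζ p).pow_eq_one_iff_dvd]
  constructor
  · intro h
    exact (ZMod.val_eq_zero a).1 (Nat.eq_zero_of_dvd_of_lt h (ZMod.val_lt a))
  · rintro rfl
    simp

lemma χ_nsmul (n : ℕ) (a : ZMod p) : χ p (n • a) = χ p a ^ n := by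
  induction n with
  | zero => simpa using χ_zero p
  | succ k ih => rw [succ_nsmul, χ_add, ih, pow_succ]

lemma χ_mul_natCast (m : ZMod p) (n : ℕ) : χ p (m * n) = χ p m ^ n := by
  rw [mul_comm, ← nsmul_eq_mul, χ_nsmul]

lemma sum_zmod {M : Type*} [AddCommMonoid M] (f : ZMod p → M) :
    ∑ a : ZMod p, f a = ∑ s ∈ Finset.range p, f (s : ZMod p) := by
  refine Finset.sum_nbij' (fun a => a.val) (fun s => (s : ZMod p)) ?_ ?_ ?_ ?_ ?_
  · intro a _; exact Finset.mem_range.2 (ZMod.val_lt a)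
  · intro s _; exact Finset.mem_univ _
  · intro a _; exact ZMod.natCast_rightInverse a
  · intro s hs; exact ZMod.val_cast_of_lt (Finset.mem_range.1 hs)
  · intro a _; rw [ZMod.natCast_rightInverse a]

lemma sum_χ (m : ZMod p) : ∑ a : ZMod p, χ p (m * a) = if m = 0 then (p : ℂ) else 0 := by
  rw [sum_zmod]
  simp_rw [χ_mul_natCast]
  by_cases hm : m = 0
  · simp [hm, χ_zero]
  · simp only [hm, if_false]
    have hw1 : χ p m ≠ 1 := fun h => hm ((χ_eq_one_iff p m).1 h)
    have hwp : χ p m ^ p = 1 := by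
      rw [← χ_mul_natCast, ZMod.natCast_self, mul_zero, χ_zero]
    have h := geom_sum_mul (χ p m) p
    rw [hwp, sub_self] at h
    exact (mul_eq_zero.mp h).resolve_right (sub_ne_zero.mpr hw1)

noncomputable def Gb (a : ZMod p) : Gp p :=
  MonoidAlgebra.of ℂ (Multiplicative (ZMod p)) (Multiplicative.ofAdd a)

lemma Gb_mul (a b : ZMod p) : Gb p a * Gb p b = Gb p (a + b) := by
  unfold Gb
  rw [← map_mul]
  rfl

lemma Gb_zero : Gb p 0 = 1 := by
  unfold Gb
  exact map_one _

lemma gp_pow (s : ℕ) : gp p ^ s = Gb p (s : ZMod p) := by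
  unfold gp Gb
  rw [← map_pow]
  congr 1
  rw [← ofAdd_nsmul]
  congr 1
  rw [nsmul_eq_mul, mul_one]

noncomputable def P' (r : ZMod p) : Gp p :=
  (p : ℂ)⁻¹ • ∑ a : ZMod p, (χ p (r * a))⁻¹ • Gb p a

lemma Pp_eq (r : ℕ) : Pp p r = P' p (r : ZMod p) := by
  unfold Pp P'
  congr 1
  rw [sum_zmod]
  refine Finset.sum_congr rfl fun s _ => ?_
  rw [gp_pow, ← Nat.cast_mul, χ_natCast]

lemma hp0 : (p : ℂ) ≠ 0 := Nat.cast_ne_zero.2 (NeZero.ne p)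

lemma P'_mul (r r' : ZMod p) : P' p r * P' p r' = if r = r' then P' p r else 0 := by
  unfold P'
  rw [smul_mul_smul_comm]
  have key : (∑ a : ZMod p, (χ p (r * a))⁻¹ • Gb p a) *
      (∑ b : ZMod p, (χ p (r' * b))⁻¹ • Gb p b) =
      ∑ c : ZMod p, (∑ a : ZMod p, (χ p (r * a))⁻¹ * (χ p (r' * (c - a)))⁻¹) • Gb p c := by
    rw [Finset.sum_mul_sum]
    have step1 : ∀ a : ZMod p, ∑ b : ZMod p,
        ((χ p (r * a))⁻¹ • Gb p a) * ((χ p (r' * b))⁻¹ • Gb p b) =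
        ∑ c : ZMod p, ((χ p (r * a))⁻¹ * (χ p (r' * (c - a)))⁻¹) • Gb p c := by
      intro a
      refine Fintype.sum_equiv (Equiv.addLeft a) _ _ fun b => ?_
      rw [smul_mul_smul_comm, Gb_mul]
      simp [Equiv.addLeft]
    simp_rw [step1]
    rw [Finset.sum_comm]
    exact Finset.sum_congr rfl fun c _ => (Finset.sum_smul).symm
  rw [key]
  have hS : ∀ c : ZMod p, ∑ a : ZMod p, (χ p (r * a))⁻¹ * (χ p (r' * (c - a)))⁻¹ =
      if r = r' then (p : ℂ) * (χ p (r * c))⁻¹ else 0 := by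
    intro c
    have hterm : ∀ a : ZMod p, (χ p (r * a))⁻¹ * (χ p (r' * (c - a)))⁻¹ =
        χ p ((r' - r) * a) * (χ p (r' * c))⁻¹ := by
      intro a
      rw [χ_inv, χ_inv, χ_inv, ← χ_add, ← χ_add]
      congr 1
      ring
    simp_rw [hterm]
    rw [← Finset.sum_mul, sum_χ]
    by_cases h : r = r'
    · subst h; simp
    · have h2 : r' - r ≠ 0 := sub_ne_zero.mpr (Ne.symm h)
      simp [h, h2]
  simp_rw [hS]
  by_cases h : r = r'
  · subst h
    simp only [eq_self_iff_true, if_true]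
    simp_rw [mul_smul]
    rw [← Finset.smul_sum, smul_smul, smul_smul]
    congr 1
    field_simp
  · simp [h]

lemma P'_sum : ∑ r : ZMod p, P' p r = 1 := by
  unfold P'
  rw [← Finset.smul_sum, Finset.sum_comm]
  have : ∀ a : ZMod p, ∑ r : ZMod p, (χ p (r * a))⁻¹ • Gb p a =
      (if a = 0 then (p : ℂ) else 0) • Gb p a := by
    intro a
    rw [← Finset.sum_smul]
    congr 1
    have : ∀ r : ZMod p, (χ p (r * a))⁻¹ = χ p ((-a) * r) := by
      intro r
      rw [χ_inv]
      congr 1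
      ring
    simp_rw [this]
    rw [sum_χ]
    simp only [neg_eq_zero]
  simp_rw [this, ite_smul, zero_smul]
  rw [Finset.sum_ite_eq' Finset.univ (0 : ZMod p) (fun a => (p : ℂ) • Gb p a),
    if_pos (Finset.mem_univ _), Gb_zero, smul_smul, inv_mul_cancel₀ (hp0 p), one_smul]


noncomputable def E (x : ZMod p × ZMod p) : Gp p ⊗[ℂ] Gp p := P' p x.1 ⊗ₜ[ℂ] P' p x.2

lemma E_mul (x y : ZMod p × ZMod p) : E p x * E p y = if x = y then E p x else 0 := by
  unfold E
  rw [Algebra.TensorProduct.tmul_mul_tmul, P'_mul, P'_mul]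
  by_cases h1 : x.1 = y.1 <;> by_cases h2 : x.2 = y.2 <;>
    simp [h1, h2, Prod.ext_iff, TensorProduct.zero_tmul, TensorProduct.tmul_zero]

lemma E_sum : ∑ x : ZMod p × ZMod p, E p x = 1 := by
  unfold E
  rw [Fintype.sum_prod_type]
  simp_rw [← TensorProduct.tmul_sum]
  rw [← TensorProduct.sum_tmul, P'_sum]
  rfl

lemma sum_sq {M : Type*} [AddCommMonoid M] (F : ZMod p → ZMod p → M) :
    (∑ r ∈ Finset.range p, ∑ s ∈ Finset.range p, F (r : ZMod p) (s : ZMod p)) =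
      ∑ x : ZMod p × ZMod p, F x.1 x.2 := by
  rw [Fintype.sum_prod_type, sum_zmod p (fun r => ∑ s : ZMod p, F r s)]
  exact Finset.sum_congr rfl fun r _ => (sum_zmod p (F (r : ZMod p))).symm

lemma orth_mul (c d : ZMod p × ZMod p → ℂ) (h : ∀ x, c x * d x = 1) :
    (∑ x : ZMod p × ZMod p, c x • E p x) * (∑ x : ZMod p × ZMod p, d x • E p x) = 1 := by
  rw [Finset.sum_mul_sum]
  simp_rw [smul_mul_smul_comm, E_mul, smul_ite, smul_zero,
    Finset.sum_ite_eq Finset.univ _ (fun y => (c _ * d y) • E p _), if_pos (Finset.mem_univ _)]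
  simp_rw [h, one_smul]
  exact E_sum p


lemma Rp_eq : Rp p = ∑ x : ZMod p × ZMod p, χ p (x.1 * x.2) • E p x := by
  unfold Rp E
  have h : ∀ r s : ℕ, qp p ^ (r * s) • (Pp p r ⊗ₜ[ℂ] Pp p s) =
      χ p ((r : ZMod p) * (s : ZMod p)) • (P' p (r : ZMod p) ⊗ₜ[ℂ] P' p (s : ZMod p)) := by
    intro r s
    rw [Pp_eq, Pp_eq, ← Nat.cast_mul, χ_natCast]
  simp_rw [h]
  exact sum_sq p fun r s => χ p (r * s) • (P' p r ⊗ₜ[ℂ] P' p s)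

lemma RpInv_eq : RpInv p = ∑ x : ZMod p × ZMod p, (χ p (x.1 * x.2))⁻¹ • E p x := by
  unfold RpInv E
  have h : ∀ r s : ℕ, (qp p ^ (r * s))⁻¹ • (Pp p r ⊗ₜ[ℂ] Pp p s) =
      (χ p ((r : ZMod p) * (s : ZMod p)))⁻¹ • (P' p (r : ZMod p) ⊗ₜ[ℂ] P' p (s : ZMod p)) := by
    intro r s
    rw [Pp_eq, Pp_eq, ← Nat.cast_mul, χ_natCast]
  simp_rw [h]
  exact sum_sq p fun r s => (χ p (r * s))⁻¹ • (P' p r ⊗ₜ[ℂ] P' p s)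

lemma RRinv : Rp p * RpInv p = 1 := by
  rw [Rp_eq, RpInv_eq]
  exact orth_mul p _ _ fun x => mul_inv_cancel₀ (χ_ne_zero p _)

end Stmt2Aux


/-- `R = ∑ q^{rs} P^r ⊗ P^s` is invertible with inverse
`∑ q^{-rs} P^r ⊗ P^s`, and satisfies the Yang–Baxter equation
`R₁₂ R₁₃ R₂₃ = R₂₃ R₁₃ R₁₂` in `G ⊗ G ⊗ G`. -/
theorem stmt2 (p : ℕ) (hp : 0 < p) :
    Rp p * RpInv p = 1 ∧ RpInv p * Rp p = 1 ∧
    Rp12 p * Rp13 p * Rp23 p = Rp23 p * Rp13 p * Rp12 p := by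
  haveI : NeZero p := ⟨hp.ne'⟩
  refine ⟨Stmt2Aux.RRinv p, ?_, by ring⟩
  rw [mul_comm]
  exact Stmt2Aux.RRinv p
end
end

section
/- Let v = Σ_{r=0}^{p-1} q^{-r²} P^r in G = ℂ[ℤ/p]. Then v is invertible, central, and satisfies the ribbon identity R'R = (v ⊗ v) Δ(v^{-1}), where R' = σ(R) = R. -/
open Finset TensorProduct

noncomputable section

/-- The ribbon element `v = ∑_r q^{-r²} P^r`. -/
noncomputable def vp (p : ℕ) : Gp p :=
  ∑ r ∈ Finset.range p, (qp p ^ (r * r))⁻¹ • Pp p r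

set_option linter.unusedSectionVars false
namespace Stmt6Aux
variable (p : ℕ) [NeZero p]

lemma hprim : IsPrimitiveRoot (qp p) p :=
  Complex.isPrimitiveRoot_exp p (NeZero.ne p)

lemma hq1 : qp p ^ p = 1 := (hprim p).pow_eq_one

lemma qmod (m : ℕ) : qp p ^ m = qp p ^ (m % p) := by
  conv_lhs => rw [← Nat.mod_add_div m p]
  rw [pow_add, pow_mul, hq1, one_pow, mul_one]

def chi (x : ZMod p) : ℂ := qp p ^ x.val

lemma chi_zero : chi p 0 = 1 := by simp [chi, ZMod.val_zero]

lemma chi_add (x y : ZMod p) : chi p (x + y) = chi p x * chi p y := by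
  rw [chi, chi, chi, ZMod.val_add, ← qmod, pow_add]

lemma chi_ne (x : ZMod p) : chi p x ≠ 0 :=
  pow_ne_zero _ (Complex.exp_ne_zero _)

lemma chi_natCast (m : ℕ) : chi p (m : ZMod p) = qp p ^ m := by
  rw [chi, ZMod.val_natCast, ← qmod]

lemma chi_neg (x : ZMod p) : chi p (-x) = (chi p x)⁻¹ := by
  refine eq_inv_of_mul_eq_one_left ?_
  rw [← chi_add, neg_add_cancel, chi_zero]

lemma sum_zmod {M : Type*} [AddCommMonoid M] (f : ℕ → M) :
    ∑ s ∈ Finset.range p, f s = ∑ x : ZMod p, f x.val := by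
  refine Finset.sum_nbij' (fun s => (s : ZMod p)) (fun x => x.val) ?_ ?_ ?_ ?_ ?_
  · intro s _; exact Finset.mem_univ _
  · intro x _; exact Finset.mem_range.2 (ZMod.val_lt x)
  · intro s hs; exact ZMod.val_cast_of_lt (Finset.mem_range.1 hs)
  · intro x _; exact ZMod.natCast_rightInverse x
  · intro s hs; rw [ZMod.val_cast_of_lt (Finset.mem_range.1 hs)]

lemma orth (c : ZMod p) : ∑ x : ZMod p, chi p (c * x) = if c = 0 then (p : ℂ) else 0 := by
  have h1 : ∀ x : ZMod p, chi p (c * x) = (qp p ^ c.val) ^ x.val := by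
    intro x
    rw [chi, ZMod.val_mul, ← qmod, pow_mul]
  simp only [h1]
  rw [← sum_zmod p (fun s => (qp p ^ c.val) ^ s)]
  by_cases hc : c = 0
  · simp [hc, ZMod.val_zero]
  · rw [if_neg hc]
    set z := qp p ^ c.val with hzdef
    have hz : z ≠ 1 := by
      intro h
      have hdvd := ((hprim p).pow_eq_one_iff_dvd c.val).1 h
      have hlt := ZMod.val_lt c
      have : c.val = 0 := Nat.eq_zero_of_dvd_of_lt hdvd hlt
      exact hc (by rwa [ZMod.val_eq_zero] at this)
    have hzp : z ^ p = 1 := by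
      rw [hzdef, ← pow_mul, mul_comm, pow_mul, hq1, one_pow]
    have := geom_sum_eq hz p
    rw [this, hzp, sub_self, zero_div]
end Stmt6Aux

namespace Stmt6Aux
variable (p : ℕ) [NeZero p]

def e (x : ZMod p) : Gp p :=
  MonoidAlgebra.of ℂ (Multiplicative (ZMod p)) (Multiplicative.ofAdd x)

lemma e_mul (x y : ZMod p) : e p x * e p y = e p (x + y) := by
  rw [e, e, e, ← map_mul]
  rfl

lemma e_zero : e p 0 = 1 := map_one _

lemma gp_pow (s : ℕ) : gp p ^ s = e p (s : ZMod p) := by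
  induction s with
  | zero => simp [e_zero]
  | succ n ih =>
    rw [pow_succ, ih]
    have h1 : gp p = e p 1 := rfl
    rw [h1, e_mul]
    congr 1
    push_cast
    ring

lemma natmul_cast (r : ℕ) (x : ZMod p) :
    ((r * x.val : ℕ) : ZMod p) = (r : ZMod p) * x := by
  rw [Nat.cast_mul, ZMod.natCast_rightInverse x]

def P' (r : ZMod p) : Gp p := (p : ℂ)⁻¹ • ∑ x : ZMod p, chi p (-(r * x)) • e p x

lemma Pp_eq (r : ℕ) : Pp p r = P' p (r : ZMod p) := by
  rw [Pp, P']
  congr 1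
  rw [sum_zmod p (fun s => (qp p ^ (r * s))⁻¹ • gp p ^ s)]
  refine Finset.sum_congr rfl fun x _ => ?_
  rw [gp_pow, ZMod.natCast_rightInverse x, chi_neg, ← natmul_cast, chi_natCast]

lemma tt_mul (a b : ℂ) (A B C D : Gp p) :
    (a • (A ⊗ₜ[ℂ] B)) * (b • (C ⊗ₜ[ℂ] D)) = (a * b) • ((A * C) ⊗ₜ[ℂ] (B * D)) := by
  rw [smul_mul_smul_comm, Algebra.TensorProduct.tmul_mul_tmul]

lemma P'_mul (r t : ZMod p) : P' p r * P' p t = if r = t then P' p r else 0 := by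
  have key : ∀ x y : ZMod p,
      chi p (-(r * x)) * chi p (-(t * y)) = chi p ((t - r) * x) * chi p (-(t * (x + y))) := by
    intro x y
    rw [← chi_add, ← chi_add]
    congr 1
    ring
  rw [P', P', smul_mul_assoc, mul_smul_comm, Finset.sum_mul_sum]
  have h1 : ∀ x : ZMod p, ∑ y : ZMod p,
      (chi p (-(r * x)) • e p x) * (chi p (-(t * y)) • e p y)
      = ∑ z : ZMod p, (chi p ((t - r) * x) * chi p (-(t * z))) • e p z := by
    intro x
    refine Fintype.sum_equiv (Equiv.addLeft x) _ _ fun y => ?_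
    rw [smul_mul_smul_comm, e_mul, key x y]
    rfl
  simp only [h1]
  rw [Finset.sum_comm]
  have h2 : ∀ z : ZMod p, ∑ x : ZMod p, (chi p ((t - r) * x) * chi p (-(t * z))) • e p z
      = ((if t - r = 0 then (p:ℂ) else 0) * chi p (-(t * z))) • e p z := by
    intro z
    rw [← Finset.sum_smul, ← Finset.sum_mul, orth]
  simp only [h2]
  by_cases hrt : r = t
  · subst hrt
    simp only [sub_self, if_pos rfl, eq_self_iff_true, if_true, P']
    rw [Finset.smul_sum, Finset.smul_sum]
    conv_rhs => rw [Finset.smul_sum]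
    refine Finset.sum_congr rfl ?_
    intro z _
    rw [smul_smul, smul_smul, smul_smul]
    congr 1
    have hpne : (p:ℂ) ≠ 0 := Nat.cast_ne_zero.2 (NeZero.ne p)
    field_simp
    try ring
  · rw [if_neg hrt, if_neg (sub_ne_zero.2 (Ne.symm hrt))]
    simp

lemma P'_sum : ∑ r : ZMod p, P' p r = 1 := by
  simp only [P']
  rw [← Finset.smul_sum, Finset.sum_comm]
  have h1 : ∀ x : ZMod p, ∑ r : ZMod p, chi p (-(r * x)) • e p x
      = (if -x = 0 then (p:ℂ) else 0) • e p x := by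
    intro x
    rw [← Finset.sum_smul, ← orth]
    congr 1
    refine Finset.sum_congr rfl fun r _ => ?_
    congr 1
    ring
  simp only [h1, neg_eq_zero, ite_smul, zero_smul]
  rw [Finset.sum_ite_eq' Finset.univ (0 : ZMod p) (fun x => (p:ℂ) • e p x)]
  simp only [Finset.mem_univ, if_pos, e_zero]
  rw [smul_smul, inv_mul_cancel₀ (Nat.cast_ne_zero.2 (NeZero.ne p)), one_smul]

def S (f : ZMod p → ZMod p → ℂ) : Gp p ⊗[ℂ] Gp p :=
  ∑ r : ZMod p, ∑ s : ZMod p, f r s • (P' p r ⊗ₜ[ℂ] P' p s)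

lemma S_mul (f h : ZMod p → ZMod p → ℂ) :
    S p f * S p h = S p (fun r s => f r s * h r s) := by
  rw [S, S, S, Finset.sum_mul_sum]
  refine Finset.sum_congr rfl ?_
  intro r _
  have h0 : ∀ u : ZMod p, u ≠ r →
      (∑ s : ZMod p, f r s • (P' p r ⊗ₜ[ℂ] P' p s)) *
      (∑ w : ZMod p, h u w • (P' p u ⊗ₜ[ℂ] P' p w)) = 0 := by
    intro u hu
    rw [Finset.sum_mul_sum]
    refine Finset.sum_eq_zero ?_
    intro s _
    refine Finset.sum_eq_zero ?_
    intro w _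
    rw [tt_mul, P'_mul, if_neg (fun hh => hu hh.symm)]
    simp
  rw [Finset.sum_eq_single r (fun u _ hu => h0 u hu) (by simp)]
  rw [Finset.sum_mul_sum]
  refine Finset.sum_congr rfl ?_
  intro s _
  have h0' : ∀ w : ZMod p, w ≠ s →
      (f r s • (P' p r ⊗ₜ[ℂ] P' p s)) * (h r w • (P' p r ⊗ₜ[ℂ] P' p w)) = 0 := by
    intro w hw
    rw [tt_mul, P'_mul, P'_mul, if_pos rfl, if_neg (fun hh => hw hh.symm)]
    simp
  rw [Finset.sum_eq_single s (fun w _ hw => h0' w hw) (by simp)]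
  rw [tt_mul, P'_mul, P'_mul, if_pos rfl, if_pos rfl]

lemma De (Δ : Gp p →ₐ[ℂ] Gp p ⊗[ℂ] Gp p)
    (hΔ : Δ (gp p) = gp p ⊗ₜ[ℂ] gp p) (x : ZMod p) :
    Δ (e p x) = e p x ⊗ₜ[ℂ] e p x := by
  have h1 : e p x = gp p ^ x.val := by
    rw [gp_pow, ZMod.natCast_rightInverse x]
  rw [h1, map_pow, hΔ, Algebra.TensorProduct.tmul_pow]

lemma DP' (Δ : Gp p →ₐ[ℂ] Gp p ⊗[ℂ] Gp p)
    (hΔ : Δ (gp p) = gp p ⊗ₜ[ℂ] gp p) (t : ZMod p) :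
    Δ (P' p t) = ∑ r : ZMod p, P' p r ⊗ₜ[ℂ] P' p (t - r) := by
  have key : ∀ r x y : ZMod p,
      chi p (-(r * x)) * chi p (-((t - r) * y)) = chi p ((y - x) * r) * chi p (-(t * y)) := by
    intro r x y
    rw [← chi_add, ← chi_add]
    congr 1
    ring
  -- compute RHS
  have hR : ∀ r : ZMod p, P' p r ⊗ₜ[ℂ] P' p (t - r)
      = ((p:ℂ)⁻¹ * (p:ℂ)⁻¹) • ∑ x : ZMod p, ∑ y : ZMod p,
          (chi p (-(r * x)) * chi p (-((t - r) * y))) • (e p x ⊗ₜ[ℂ] e p y) := by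
    intro r
    rw [P', P', ← TensorProduct.smul_tmul', TensorProduct.tmul_smul, smul_smul,
      TensorProduct.sum_tmul]
    congr 1
    refine Finset.sum_congr rfl ?_
    intro x _
    rw [← TensorProduct.smul_tmul', TensorProduct.tmul_sum, Finset.smul_sum]
    refine Finset.sum_congr rfl ?_
    intro y _
    rw [TensorProduct.tmul_smul, smul_smul]
  simp only [hR]
  rw [← Finset.smul_sum, Finset.sum_comm]
  -- now sum over x outermost; swap r and y
  have h2 : ∀ x : ZMod p,
      ∑ r : ZMod p, ∑ y : ZMod p,
        (chi p (-(r * x)) * chi p (-((t - r) * y))) • (e p x ⊗ₜ[ℂ] e p y)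
      = (p:ℂ) • (chi p (-(t * x)) • (e p x ⊗ₜ[ℂ] e p x)) := by
    intro x
    rw [Finset.sum_comm]
    have h3 : ∀ y : ZMod p,
        ∑ r : ZMod p, (chi p (-(r * x)) * chi p (-((t - r) * y))) • (e p x ⊗ₜ[ℂ] e p y)
        = ((if y - x = 0 then (p:ℂ) else 0) * chi p (-(t * y))) • (e p x ⊗ₜ[ℂ] e p y) := by
      intro y
      simp only [key _ x y]
      rw [← Finset.sum_smul, ← Finset.sum_mul, orth]
    simp only [h3, ite_mul, zero_mul, ite_smul, zero_smul, sub_eq_zero]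
    rw [Finset.sum_ite_eq' Finset.univ (x : ZMod p)
      (fun y => ((p:ℂ) * chi p (-(t * y))) • (e p x ⊗ₜ[ℂ] e p y))]
    simp [mul_smul]
  simp only [h2]
  -- LHS
  rw [P', map_smul, map_sum]
  simp only [map_smul, De p Δ hΔ]
  rw [Finset.smul_sum, Finset.smul_sum]
  refine Finset.sum_congr rfl ?_
  intro x _
  rw [smul_smul, smul_smul, smul_smul]
  congr 1
  have hpne : (p:ℂ) ≠ 0 := Nat.cast_ne_zero.2 (NeZero.ne p)
  field_simp
  try ring

lemma chi_valmul (x y : ZMod p) : chi p (x * y) = qp p ^ (x.val * y.val) := by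
  have h : ((x.val * y.val : ℕ) : ZMod p) = x * y := by
    rw [Nat.cast_mul, ZMod.natCast_rightInverse x, ZMod.natCast_rightInverse y]
  rw [← h, chi_natCast]

lemma v_eq : vp p = ∑ x : ZMod p, chi p (-(x * x)) • P' p x := by
  rw [vp, sum_zmod p (fun r => (qp p ^ (r * r))⁻¹ • Pp p r)]
  refine Finset.sum_congr rfl ?_
  intro x _
  rw [Pp_eq, ZMod.natCast_rightInverse x, chi_neg, chi_valmul]

lemma Rp_eq : Rp p = S p (fun r s => chi p (r * s)) := by
  rw [Rp, S, sum_zmod p (fun r => ∑ s ∈ Finset.range p,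
    qp p ^ (r * s) • (Pp p r ⊗ₜ[ℂ] Pp p s))]
  refine Finset.sum_congr rfl ?_
  intro x _
  rw [sum_zmod p (fun s => qp p ^ (x.val * s) • (Pp p x.val ⊗ₜ[ℂ] Pp p s))]
  refine Finset.sum_congr rfl ?_
  intro y _
  rw [Pp_eq, Pp_eq, ZMod.natCast_rightInverse x, ZMod.natCast_rightInverse y, chi_valmul]

lemma vv_eq : vp p ⊗ₜ[ℂ] vp p = S p (fun r s => chi p (-(r * r)) * chi p (-(s * s))) := by
  rw [v_eq, S, TensorProduct.sum_tmul]
  refine Finset.sum_congr rfl ?_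
  intro r _
  rw [← TensorProduct.smul_tmul', TensorProduct.tmul_sum, Finset.smul_sum]
  refine Finset.sum_congr rfl ?_
  intro s _
  rw [TensorProduct.tmul_smul, smul_smul]

lemma Dw (Δ : Gp p →ₐ[ℂ] Gp p ⊗[ℂ] Gp p)
    (hΔ : Δ (gp p) = gp p ⊗ₜ[ℂ] gp p) :
    Δ (∑ t : ZMod p, chi p (t * t) • P' p t)
      = S p (fun r s => chi p ((r + s) * (r + s))) := by
  rw [map_sum]
  simp only [map_smul, DP' p Δ hΔ, Finset.smul_sum]
  rw [Finset.sum_comm, S]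
  refine Finset.sum_congr rfl ?_
  intro r _
  refine (Fintype.sum_equiv (Equiv.addLeft r)
    (fun s => chi p ((r + s) * (r + s)) • (P' p r ⊗ₜ[ℂ] P' p s))
    (fun t => chi p (t * t) • (P' p r ⊗ₜ[ℂ] P' p (t - r))) ?_).symm
  intro s
  simp only [Equiv.coe_addLeft, add_sub_cancel_left]

lemma vmulw : (∑ r : ZMod p, chi p (-(r * r)) • P' p r)
    * (∑ t : ZMod p, chi p (t * t) • P' p t) = 1 := by
  rw [Finset.sum_mul_sum]
  have h1 : ∀ r : ZMod p, ∑ t : ZMod p,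
      (chi p (-(r * r)) • P' p r) * (chi p (t * t) • P' p t) = P' p r := by
    intro r
    have h2 : ∀ t : ZMod p, (chi p (-(r * r)) • P' p r) * (chi p (t * t) • P' p t)
        = (chi p (-(r * r)) * chi p (t * t)) • (if r = t then P' p r else 0) := by
      intro t
      rw [smul_mul_smul_comm, P'_mul]
    simp only [h2]
    rw [Finset.sum_eq_single r (fun t _ ht => by rw [if_neg (fun hh => ht hh.symm), smul_zero])
      (by simp)]
    rw [if_pos rfl, chi_neg, inv_mul_cancel₀ (chi_ne p _), one_smul]
  simp only [h1]
  exact P'_sum p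

end Stmt6Aux

open Stmt6Aux in
/-- For `G = ℂ[ℤ/p]`, the element `v = ∑ q^{-r²} P^r` is invertible and
central, `R' = σ(R) = R`, and the ribbon identity
`R'R = (v ⊗ v) Δ(v^{-1})` holds. -/
theorem stmt6 (p : ℕ) (hp : 0 < p)
    (Δ : Gp p →ₐ[ℂ] Gp p ⊗[ℂ] Gp p)
    (hΔ : Δ (gp p) = gp p ⊗ₜ[ℂ] gp p) :
    (Algebra.TensorProduct.comm ℂ (Gp p) (Gp p)) (Rp p) = Rp p ∧
    (∀ x : Gp p, vp p * x = x * vp p) ∧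
    ∃ vinv : Gp p, vp p * vinv = 1 ∧ vinv * vp p = 1 ∧
      Rp p * Rp p = (vp p ⊗ₜ[ℂ] vp p) * Δ vinv := by
  haveI : NeZero p := ⟨hp.ne'⟩
  refine ⟨?_, fun x => mul_comm _ _, ?_⟩
  · rw [Rp]
    simp only [map_sum, map_smul, Algebra.TensorProduct.comm_tmul]
    rw [Finset.sum_comm]
    refine Finset.sum_congr rfl ?_
    intro s _
    refine Finset.sum_congr rfl ?_
    intro r _
    rw [Nat.mul_comm]
  · refine ⟨∑ t : ZMod p, chi p (t * t) • P' p t, ?_, ?_, ?_⟩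
    · rw [v_eq]; exact vmulw p
    · rw [v_eq, mul_comm]; exact vmulw p
    · rw [Rp_eq, S_mul, vv_eq, Dw p Δ hΔ, S_mul]
      rw [S, S]
      refine Finset.sum_congr rfl ?_
      intro r _
      refine Finset.sum_congr rfl ?_
      intro s _
      congr 1
      rw [← chi_add, ← chi_add, ← chi_add]
      congr 1
      ring
end
end

section
/- Let (G, R) be a quasitriangular Hopf algebra and N = R'R. Then N satisfies the reflection-type exchange relation R' N^{(1)} R N^{(2)} = N^{(2)} R' N^{(1)} R in G ⊗ G ⊗ G, where N^{(1)} = N₁₃, N^{(2)} = N₂₃, R = R₁₂, R' = σ(R)₁₂. -/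
open TensorProduct

noncomputable section

variable (G : Type*) [Ring G] [Algebra ℂ G]

/-- Embedding of `G ⊗ G` in legs 1,2 of `(G ⊗ G) ⊗ G`. -/
noncomputable def leg12 : (G ⊗[ℂ] G) →ₐ[ℂ] (G ⊗[ℂ] G) ⊗[ℂ] G :=
  Algebra.TensorProduct.includeLeft

/-- Embedding of `G ⊗ G` in legs 1,3 of `(G ⊗ G) ⊗ G`. -/
noncomputable def leg13 : (G ⊗[ℂ] G) →ₐ[ℂ] (G ⊗[ℂ] G) ⊗[ℂ] G :=
  Algebra.TensorProduct.map
    (Algebra.TensorProduct.includeLeft : G →ₐ[ℂ] G ⊗[ℂ] G) (AlgHom.id ℂ G)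

/-- Embedding of `G ⊗ G` in legs 2,3 of `(G ⊗ G) ⊗ G`. -/
noncomputable def leg23 : (G ⊗[ℂ] G) →ₐ[ℂ] (G ⊗[ℂ] G) ⊗[ℂ] G :=
  Algebra.TensorProduct.map
    (Algebra.TensorProduct.includeRight : G →ₐ[ℂ] G ⊗[ℂ] G) (AlgHom.id ℂ G)

/-- Embedding of `G ⊗ G` in legs 1,2 of `G ⊗ (G ⊗ G)`. -/
noncomputable def leg12' : (G ⊗[ℂ] G) →ₐ[ℂ] G ⊗[ℂ] (G ⊗[ℂ] G) :=
  Algebra.TensorProduct.map (AlgHom.id ℂ G)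
    (Algebra.TensorProduct.includeLeft : G →ₐ[ℂ] G ⊗[ℂ] G)

/-- Embedding of `G ⊗ G` in legs 1,3 of `G ⊗ (G ⊗ G)`. -/
noncomputable def leg13' : (G ⊗[ℂ] G) →ₐ[ℂ] G ⊗[ℂ] (G ⊗[ℂ] G) :=
  Algebra.TensorProduct.map (AlgHom.id ℂ G)
    (Algebra.TensorProduct.includeRight : G →ₐ[ℂ] G ⊗[ℂ] G)


noncomputable def s12 : ((G ⊗[ℂ] G) ⊗[ℂ] G) ≃ₐ[ℂ] ((G ⊗[ℂ] G) ⊗[ℂ] G) :=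
  Algebra.TensorProduct.congr (Algebra.TensorProduct.comm ℂ G G) AlgEquiv.refl
noncomputable def s23 : ((G ⊗[ℂ] G) ⊗[ℂ] G) ≃ₐ[ℂ] ((G ⊗[ℂ] G) ⊗[ℂ] G) :=
  (Algebra.TensorProduct.assoc ℂ ℂ ℂ G G G).trans
    ((Algebra.TensorProduct.congr AlgEquiv.refl (Algebra.TensorProduct.comm ℂ G G)).trans
      (Algebra.TensorProduct.assoc ℂ ℂ ℂ G G G).symm)

lemma s12_leg12 (x : G ⊗[ℂ] G) :
    s12 G (leg12 G x) = leg12 G ((Algebra.TensorProduct.comm ℂ G G) x) := by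
  induction x using TensorProduct.induction_on with
  | zero => simp
  | tmul a b => simp [s12, leg12, Algebra.TensorProduct.includeLeft_apply]
  | add x y hx hy => simp [map_add, hx, hy]

lemma s12_leg13 (x : G ⊗[ℂ] G) : s12 G (leg13 G x) = leg23 G x := by
  induction x using TensorProduct.induction_on with
  | zero => simp
  | tmul a b => simp [s12, leg13, leg23]
  | add x y hx hy => simp [map_add, hx, hy]

lemma s12_leg23 (x : G ⊗[ℂ] G) : s12 G (leg23 G x) = leg13 G x := by
  induction x using TensorProduct.induction_on with
  | zero => simp
  | tmul a b => simp [s12, leg13, leg23]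
  | add x y hx hy => simp [map_add, hx, hy]

lemma s23_leg12 (x : G ⊗[ℂ] G) : s23 G (leg12 G x) = leg13 G x := by
  induction x using TensorProduct.induction_on with
  | zero => simp
  | tmul a b => simp [s23, leg12, leg13, Algebra.TensorProduct.includeLeft_apply]
  | add x y hx hy => simp [map_add, hx, hy]

lemma s23_leg13 (x : G ⊗[ℂ] G) : s23 G (leg13 G x) = leg12 G x := by
  induction x using TensorProduct.induction_on with
  | zero => simp
  | tmul a b => simp [s23, leg12, leg13, Algebra.TensorProduct.includeLeft_apply]
  | add x y hx hy => simp [map_add, hx, hy]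

lemma s23_leg23 (x : G ⊗[ℂ] G) :
    s23 G (leg23 G x) = leg23 G ((Algebra.TensorProduct.comm ℂ G G) x) := by
  induction x using TensorProduct.induction_on with
  | zero => simp
  | tmul a b => simp [s23, leg23]
  | add x y hx hy => simp [map_add, hx, hy]

lemma exch (Δ : G →ₐ[ℂ] G ⊗[ℂ] G) (R : G ⊗[ℂ] G)
    (hqt3 : ∀ x : G, R * Δ x = (Algebra.TensorProduct.comm ℂ G G) (Δ x) * R)
    (x : G ⊗[ℂ] G) :
    leg12 G R * (Algebra.TensorProduct.map Δ (AlgHom.id ℂ G)) x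
      = s12 G ((Algebra.TensorProduct.map Δ (AlgHom.id ℂ G)) x) * leg12 G R := by
  induction x using TensorProduct.induction_on with
  | zero => simp
  | tmul a b =>
    simp only [Algebra.TensorProduct.map_tmul, AlgHom.coe_id, id_eq, leg12,
      Algebra.TensorProduct.includeLeft_apply, Algebra.TensorProduct.tmul_mul_tmul,
      one_mul, mul_one, hqt3 a, s12, Algebra.TensorProduct.congr_apply,
      Algebra.TensorProduct.map_tmul, AlgEquiv.coe_refl, AlgEquiv.coe_algHom]
  | add x y hx hy => simp [map_add, mul_add, add_mul, hx, hy]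

lemma comm_comm_apply (x : G ⊗[ℂ] G) :
    (Algebra.TensorProduct.comm ℂ G G) ((Algebra.TensorProduct.comm ℂ G G) x) = x := by
  induction x using TensorProduct.induction_on with
  | zero => simp
  | tmul a b => simp
  | add x y hx hy => simp [map_add, hx, hy]

lemma ybe (Δ : G →ₐ[ℂ] G ⊗[ℂ] G) (R : G ⊗[ℂ] G)
    (hqt1 : (Algebra.TensorProduct.map Δ (AlgHom.id ℂ G)) R = leg13 G R * leg23 G R)
    (hqt3 : ∀ x : G, R * Δ x = (Algebra.TensorProduct.comm ℂ G G) (Δ x) * R) :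
    leg12 G R * leg13 G R * leg23 G R = leg23 G R * leg13 G R * leg12 G R := by
  have h := exch G Δ R hqt3 R
  rw [hqt1, map_mul, s12_leg13, s12_leg23] at h
  rw [mul_assoc, h]

theorem helper {M : Type*} [Monoid M] (A A' B B' C C' : M)
    (h1 : A*B*C = C*B*A) (h2 : B*A*C' = C'*A*B) (h3 : A'*B'*C' = C'*B'*A')
    (h4 : C*A'*B' = B'*A'*C) :
    A' * (B'*B) * A * (C'*C) = C'*C * A' * (B'*B) * A := by
  have h1' : A*(B*C) = C*(B*A) := by rw [← mul_assoc, h1, mul_assoc]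
  have h2x : ∀ x : M, B*(A*(C'*x)) = C'*(A*(B*x)) := fun x => by
    rw [← mul_assoc, ← mul_assoc, h2, mul_assoc, mul_assoc]
  have h3x : ∀ x : M, A'*(B'*(C'*x)) = C'*(B'*(A'*x)) := fun x => by
    rw [← mul_assoc, ← mul_assoc, h3, mul_assoc, mul_assoc]
  have h4x : ∀ x : M, C*(A'*(B'*x)) = B'*(A'*(C*x)) := fun x => by
    rw [← mul_assoc, ← mul_assoc, h4, mul_assoc, mul_assoc]
  calc A' * (B'*B) * A * (C'*C)
      = A'*(B'*(B*(A*(C'*C)))) := by simp only [mul_assoc]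
    _ = A'*(B'*(C'*(A*(B*C)))) := by rw [h2x]
    _ = C'*(B'*(A'*(A*(B*C)))) := by rw [h3x]
    _ = C'*(B'*(A'*(C*(B*A)))) := by rw [h1']
    _ = C'*(C*(A'*(B'*(B*A)))) := by rw [← h4x]
    _ = C'*C * A' * (B'*B) * A := by simp only [mul_assoc]

/-- For a quasitriangular Hopf algebra and `N = R'R`, the reflection-type
exchange relation `R' N₁₃ R N₂₃ = N₂₃ R' N₁₃ R` holds in `G ⊗ G ⊗ G`
(all products in legs as indicated, `R = R₁₂`, `R' = σ(R)₁₂`). -/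
theorem stmt9 (Δ : G →ₐ[ℂ] G ⊗[ℂ] G) (R Rinv : G ⊗[ℂ] G)
    (hinv : R * Rinv = 1) (hinv' : Rinv * R = 1)
    (hqt1 : (Algebra.TensorProduct.map Δ (AlgHom.id ℂ G)) R
              = leg13 G R * leg23 G R)
    (hqt2 : (Algebra.TensorProduct.map (AlgHom.id ℂ G) Δ) R
              = leg13' G R * leg12' G R)
    (hqt3 : ∀ x : G, R * Δ x = (Algebra.TensorProduct.comm ℂ G G) (Δ x) * R) :
    leg12 G ((Algebra.TensorProduct.comm ℂ G G) R)
      * leg13 G ((Algebra.TensorProduct.comm ℂ G G) R * R)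
      * leg12 G R
      * leg23 G ((Algebra.TensorProduct.comm ℂ G G) R * R)
    = leg23 G ((Algebra.TensorProduct.comm ℂ G G) R * R)
      * leg12 G ((Algebra.TensorProduct.comm ℂ G G) R)
      * leg13 G ((Algebra.TensorProduct.comm ℂ G G) R * R)
      * leg12 G R := by
  set σR := (Algebra.TensorProduct.comm ℂ G G) R with hσR
  have hσσ : (Algebra.TensorProduct.comm ℂ G G) σR = R := by
    rw [hσR, comm_comm_apply]
  have h1 := ybe G Δ R hqt1 hqt3
  have h2 : leg13 G R * leg12 G R * leg23 G σR
      = leg23 G σR * leg12 G R * leg13 G R := by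
    have := congrArg (s23 G) h1
    simpa only [map_mul, s23_leg12, s23_leg13, s23_leg23, ← hσR] using this
  have h4 : leg23 G R * leg12 G σR * leg13 G σR
      = leg13 G σR * leg12 G σR * leg23 G R := by
    have := congrArg (s12 G) h2
    simpa only [map_mul, s12_leg12, s12_leg13, s12_leg23, hσσ, ← hσR] using this
  have h3 : leg12 G σR * leg13 G σR * leg23 G σR
      = leg23 G σR * leg13 G σR * leg12 G σR := by
    have := congrArg (s23 G) h4
    simpa only [map_mul, s23_leg12, s23_leg13, s23_leg23, hσσ, ← hσR] using this.symm
  rw [map_mul, map_mul]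
  exact helper _ _ _ _ _ _ h1 h2 h3 h4
end
end

section
/- Each representation D^{st}_N of the lattice U(1) current algebra defined in the previous statement is irreducible (on the p^{N-1}-dimensional space (ℂ^p)^{⊗(N-1)}), and representations D^{st}_N and D^{s't'}_N are inequivalent unless (s,t) = (s',t') (as elements of (ℤ/p)², with p odd). -/
noncomputable section

/-- The representation space of `D^{st}_N`: functions on tuples
`(r₁,…,r_{N−1}) ∈ (ℤ/p)^{N−1}`. -/
abbrev Bsp (p N : ℕ) := (Fin (N - 1) → ZMod p) → ℂ

/-- The holonomy operator
`v_ν |r⟩ = q^{r₁+⋯+r_{ν−1}} |r₁,…,r_ν+1,…,r_{N−1}⟩`. -/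
noncomputable def vOp (p N : ℕ) (ν : Fin (N - 1)) :
    Bsp p N →ₗ[ℂ] Bsp p N where
  toFun f := fun r =>
    qp p ^ (∑ μ ∈ Finset.univ.filter (fun μ => μ < ν), (r μ).val) *
      f (Function.update r ν (r ν - 1))
  map_add' f g := by funext r; simp [mul_add]
  map_smul' c f := by funext r; simp [smul_eq_mul]; ring

/-- The site operator `g_ν |r⟩ = q^{r_ν} |r⟩` (for `1 ≤ ν ≤ N−1`). -/
noncomputable def gOp (p N : ℕ) (ν : Fin (N - 1)) :
    Bsp p N →ₗ[ℂ] Bsp p N where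
  toFun f := fun r => qp p ^ (r ν).val * f r
  map_add' f g := by funext r; simp [mul_add]
  map_smul' c f := by funext r; simp [smul_eq_mul]; ring

/-- The site operator `g₀ |r⟩ = q^{r₁+⋯+r_{N−1}+s+t} |r⟩`. -/
noncomputable def g0Op (p N : ℕ) (s t : ZMod p) :
    Bsp p N →ₗ[ℂ] Bsp p N where
  toFun f := fun r => qp p ^ ((∑ μ, (r μ).val) + s.val + t.val) * f r
  map_add' f g := by funext r; simp [mul_add]
  map_smul' c f := by funext r; simp [smul_eq_mul]; ring

/-- The central monodromy operator `c |r⟩ = q^s |r⟩`. -/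
noncomputable def cOp (p N : ℕ) (s : ZMod p) :
    Bsp p N →ₗ[ℂ] Bsp p N :=
  qp p ^ s.val • LinearMap.id

/- ############ auxiliary lemmas ############ -/

lemma qp_prim {p : ℕ} (hp : 0 < p) : IsPrimitiveRoot (qp p) p :=
  Complex.isPrimitiveRoot_exp p hp.ne'

lemma qp_ne_zero (p : ℕ) : qp p ≠ 0 := Complex.exp_ne_zero _

lemma qp_pow_p {p : ℕ} (hp : 0 < p) : qp p ^ p = 1 := (qp_prim hp).pow_eq_one

lemma qp_pow_mod {p : ℕ} (hp : 0 < p) (n : ℕ) : qp p ^ (n % p) = qp p ^ n := by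
  conv_rhs => rw [← Nat.div_add_mod n p]
  rw [pow_add, pow_mul, qp_pow_p hp, one_pow, one_mul]

lemma qp_pow_val_inj {p : ℕ} (hp : 0 < p) {a b : ZMod p}
    (h : qp p ^ a.val = qp p ^ b.val) : a = b := by
  haveI : NeZero p := ⟨hp.ne'⟩
  have := (qp_prim hp).pow_inj (ZMod.val_lt a) (ZMod.val_lt b) h
  exact ZMod.val_injective p this

lemma qp_pow_val_add {p : ℕ} (hp : 0 < p) (a b : ZMod p) :
    qp p ^ (a + b).val = qp p ^ a.val * qp p ^ b.val := by
  haveI : NeZero p := ⟨hp.ne'⟩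
  rw [ZMod.val_add, qp_pow_mod hp, pow_add]

/-- character orthogonality -/
lemma qp_charSum {p : ℕ} [NeZero p] (hp : 0 < p) (a b : ZMod p) :
    ∑ j : ZMod p, qp p ^ (j.val * a.val) * (qp p ^ (j.val * b.val))⁻¹
      = if a = b then (p : ℂ) else 0 := by
  set z : ℂ := qp p ^ a.val * (qp p ^ b.val)⁻¹ with hz
  have hterm : ∀ j : ZMod p,
      qp p ^ (j.val * a.val) * (qp p ^ (j.val * b.val))⁻¹ = z ^ j.val := by
    intro j
    rw [hz, mul_pow, mul_comm j.val a.val, mul_comm j.val b.val,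
      pow_mul, pow_mul, inv_pow]
  have hsum : ∑ j : ZMod p, qp p ^ (j.val * a.val) * (qp p ^ (j.val * b.val))⁻¹
      = ∑ i ∈ Finset.range p, z ^ i := by
    rw [Finset.sum_congr rfl (fun j _ => hterm j)]
    refine Finset.sum_nbij' (fun j => j.val) (fun i => (i : ZMod p)) ?_ ?_ ?_ ?_ ?_
    · intro j _; exact Finset.mem_range.mpr (ZMod.val_lt j)
    · intro i _; exact Finset.mem_univ _
    · intro j _; exact ZMod.natCast_zmod_val j
    · intro i hi; exact ZMod.val_cast_of_lt (Finset.mem_range.mp hi)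
    · intro j _; rfl
  rw [hsum]
  by_cases hab : a = b
  · subst hab
    have hz1 : z = 1 := by
      rw [hz, mul_inv_cancel₀ (pow_ne_zero _ (qp_ne_zero p))]
    simp [hz1]
  · have hzp : z ^ p = 1 := by
      rw [hz, mul_pow, inv_pow, ← pow_mul, ← pow_mul, mul_comm a.val p,
        mul_comm b.val p, pow_mul, pow_mul, qp_pow_p hp, one_pow, one_pow, inv_one, mul_one]
    have hz1 : z ≠ 1 := by
      intro h
      apply hab
      apply qp_pow_val_inj hp
      have hb : qp p ^ b.val ≠ 0 := pow_ne_zero _ (qp_ne_zero p)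
      rw [hz, mul_inv_eq_one₀ hb] at h
      exact h
    rw [geom_sum_eq hz1, hzp, sub_self, zero_div, if_neg hab]

/-- the delta function at `r0` -/
def dl {p N : ℕ} (r0 : Fin (N - 1) → ZMod p) : Bsp p N :=
  fun r => if r = r0 then 1 else 0

lemma gOp_apply {p N : ℕ} (ν : Fin (N - 1)) (f : Bsp p N) :
    gOp p N ν f = fun r => qp p ^ (r ν).val * f r := rfl

lemma vOp_apply {p N : ℕ} (ν : Fin (N - 1)) (f : Bsp p N) :
    vOp p N ν f = fun r =>
      qp p ^ (∑ μ ∈ Finset.univ.filter (fun μ => μ < ν), (r μ).val) *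
        f (Function.update r ν (r ν - 1)) := rfl

/-- Monomials in the `gOp` applied to a member stay in an invariant subspace. -/
lemma mon_mem {p N : ℕ} {V : Submodule ℂ (Bsp p N)}
    (hg : ∀ ν, V.map (gOp p N ν) ≤ V) {f : Bsp p N} (hf : f ∈ V) :
    ∀ (n : ℕ) (k : Fin (N - 1) → ℕ), (∑ ν, k ν) = n →
      (fun r => (∏ ν, qp p ^ (k ν * (r ν).val)) * f r) ∈ V := by
  intro n
  induction n with
  | zero =>
    intro k hk
    have hk0 : ∀ ν, k ν = 0 := by
      intro ν
      exact (Finset.sum_eq_zero_iff.mp hk) ν (Finset.mem_univ ν)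
    have : (fun r => (∏ ν, qp p ^ (k ν * (r ν).val)) * f r) = f := by
      funext r; simp [hk0]
    rw [this]; exact hf
  | succ n ih =>
    intro k hk
    have hex : ∃ ν, 0 < k ν := by
      by_contra h
      push_neg at h
      have : ∀ ν, k ν = 0 := fun ν => Nat.le_zero.mp (h ν)
      simp [this] at hk
    obtain ⟨ν, hν⟩ := hex
    set k' : Fin (N - 1) → ℕ := Function.update k ν (k ν - 1) with hk'
    have hsum : (∑ μ, k' μ) = n := by
      have h1 : (∑ μ, k μ) = k ν + ∑ μ ∈ Finset.univ.erase ν, k μ :=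
        (Finset.add_sum_erase _ k (Finset.mem_univ ν)).symm
      have h2 : (∑ μ, k' μ) = k' ν + ∑ μ ∈ Finset.univ.erase ν, k' μ :=
        (Finset.add_sum_erase _ k' (Finset.mem_univ ν)).symm
      have h3 : ∑ μ ∈ Finset.univ.erase ν, k' μ = ∑ μ ∈ Finset.univ.erase ν, k μ := by
        apply Finset.sum_congr rfl
        intro μ hμ
        rw [hk', Function.update_of_ne (Finset.ne_of_mem_erase hμ)]
      have h4 : k' ν = k ν - 1 := by rw [hk', Function.update_self]
      omega
    have hmem := ih k' hsum
    have hgm := hg ν (Submodule.mem_map_of_mem hmem)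
    have heq : gOp p N ν (fun r => (∏ μ, qp p ^ (k' μ * (r μ).val)) * f r)
        = fun r => (∏ μ, qp p ^ (k μ * (r μ).val)) * f r := by
      funext r
      rw [gOp_apply]
      beta_reduce
      rw [← mul_assoc]
      congr 1
      rw [← Finset.mul_prod_erase _ _ (Finset.mem_univ ν),
        ← Finset.mul_prod_erase _ (fun μ => qp p ^ (k μ * (r μ).val)) (Finset.mem_univ ν),
        ← mul_assoc]
      congr 1
      · rw [hk', Function.update_self, ← pow_add]
        congr 1
        have : k ν - 1 + 1 = k ν := Nat.succ_pred_eq_of_pos hν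
        calc (r ν).val + (k ν - 1) * (r ν).val = ((k ν - 1) + 1) * (r ν).val := by ring
        _ = k ν * (r ν).val := by rw [this]
      · apply Finset.prod_congr rfl
        intro μ hμ
        rw [hk', Function.update_of_ne (Finset.ne_of_mem_erase hμ)]
    rw [heq] at hgm
    exact hgm

/-- Delta extraction: if `f ∈ V` with `f r0 ≠ 0` and `V` is `gOp`-invariant,
then the delta function at `r0` lies in `V`. -/
lemma dl_mem {p N : ℕ} (hp : 0 < p) {V : Submodule ℂ (Bsp p N)}
    (hg : ∀ ν, V.map (gOp p N ν) ≤ V) {f : Bsp p N} (hf : f ∈ V)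
    {r0 : Fin (N - 1) → ZMod p} (h0 : f r0 ≠ 0) : dl r0 ∈ V := by
  haveI : NeZero p := ⟨hp.ne'⟩
  set S : Bsp p N := ∑ k : Fin (N - 1) → ZMod p,
    (∏ ν, (qp p ^ ((k ν).val * (r0 ν).val))⁻¹) •
      (fun r => (∏ ν, qp p ^ ((k ν).val * (r ν).val)) * f r) with hS
  have hSV : S ∈ V := by
    apply Submodule.sum_mem
    intro k _
    exact Submodule.smul_mem _ _
      (mon_mem hg hf (∑ ν, (k ν).val) (fun ν => (k ν).val) rfl)
  have hSval : S = (((p : ℂ) ^ (N - 1)) * f r0) • dl r0 := by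
    funext r
    rw [hS]
    rw [Finset.sum_apply]
    have hterm : ∀ k : Fin (N - 1) → ZMod p,
        ((∏ ν, (qp p ^ ((k ν).val * (r0 ν).val))⁻¹) •
          (fun r => (∏ ν, qp p ^ ((k ν).val * (r ν).val)) * f r)) r
        = (∏ ν, qp p ^ ((k ν).val * (r ν).val) * (qp p ^ ((k ν).val * (r0 ν).val))⁻¹) * f r := by
      intro k
      simp only [Pi.smul_apply, smul_eq_mul]
      rw [← mul_assoc, ← Finset.prod_mul_distrib]
      congr 1
      exact Finset.prod_congr rfl fun ν _ => mul_comm _ _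
    rw [Finset.sum_congr rfl (fun k _ => hterm k), ← Finset.sum_mul]
    have hswap : (∑ k : Fin (N - 1) → ZMod p,
        ∏ ν, qp p ^ ((k ν).val * (r ν).val) * (qp p ^ ((k ν).val * (r0 ν).val))⁻¹)
        = ∏ ν, ∑ j : ZMod p, qp p ^ (j.val * (r ν).val) * (qp p ^ (j.val * (r0 ν).val))⁻¹ := by
      rw [Finset.prod_univ_sum]
      rw [← Fintype.piFinset_univ]
    rw [hswap]
    rw [Finset.prod_congr rfl (fun ν _ => qp_charSum hp (r ν) (r0 ν))]
    by_cases hr : r = r0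
    · subst hr
      simp [dl, Finset.prod_const, Finset.card_univ]
    · have hex : ∃ ν, r ν ≠ r0 ν := by
        by_contra h
        push_neg at h
        exact hr (funext h)
      obtain ⟨ν, hν⟩ := hex
      rw [Finset.prod_eq_zero (Finset.mem_univ ν) (by rw [if_neg hν])]
      simp [dl, hr]
  have hc : ((p : ℂ) ^ (N - 1)) * f r0 ≠ 0 := by
    apply mul_ne_zero _ h0
    exact pow_ne_zero _ (Nat.cast_ne_zero.mpr hp.ne')
  have : dl r0 = (((p : ℂ) ^ (N - 1)) * f r0)⁻¹ • S := by
    rw [hSval, smul_smul, inv_mul_cancel₀ hc, one_smul]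
  rw [this]
  exact Submodule.smul_mem _ _ hSV

/-- Moving a delta function by `vOp`. -/
lemma dl_shift {p N : ℕ} {V : Submodule ℂ (Bsp p N)}
    (hv : ∀ ν, V.map (vOp p N ν) ≤ V) {r0 : Fin (N - 1) → ZMod p}
    (h : dl r0 ∈ V) (ν : Fin (N - 1)) :
    dl (Function.update r0 ν (r0 ν + 1)) ∈ V := by
  set r1 := Function.update r0 ν (r0 ν + 1) with hr1
  set c : ℂ := qp p ^ (∑ μ ∈ Finset.univ.filter (fun μ => μ < ν), (r1 μ).val) with hc
  have hcne : c ≠ 0 := pow_ne_zero _ (qp_ne_zero p)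
  have hkey : vOp p N ν (dl r0) = c • dl r1 := by
    funext r
    rw [vOp_apply]
    simp only [Pi.smul_apply, smul_eq_mul, dl]
    by_cases hr : r = r1
    · subst hr
      have h1 : Function.update r1 ν (r1 ν - 1) = r0 := by
        rw [hr1]
        funext μ
        by_cases hμ : μ = ν
        · subst hμ; simp
        · simp [Function.update_of_ne hμ]
      rw [if_pos rfl, if_pos h1, hc]
    · have h1 : Function.update r ν (r ν - 1) ≠ r0 := by
        intro hcontra
        apply hr
        have : Function.update (Function.update r ν (r ν - 1)) ν ((r ν - 1) + 1)
            = Function.update r0 ν (r0 ν + 1) := by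
          rw [hcontra]
          congr 1
          rw [← hcontra, Function.update_self]
        rw [Function.update_idem, sub_add_cancel, Function.update_eq_self] at this
        rw [this, hr1]
      rw [if_neg h1, if_neg hr, mul_zero, mul_zero]
  have hm := hv ν (Submodule.mem_map_of_mem h)
  rw [hkey] at hm
  have : dl r1 = c⁻¹ • (c • dl r1) := by
    rw [smul_smul, inv_mul_cancel₀ hcne, one_smul]
  rw [this]
  exact Submodule.smul_mem _ _ hm

/-- All deltas lie in `V` once one does. -/
lemma dl_all {p N : ℕ} (hp : 0 < p) {V : Submodule ℂ (Bsp p N)}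
    (hv : ∀ ν, V.map (vOp p N ν) ≤ V) {r0 : Fin (N - 1) → ZMod p}
    (h : dl r0 ∈ V) : ∀ r1, dl (r1 : Fin (N - 1) → ZMod p) ∈ V := by
  haveI : NeZero p := ⟨hp.ne'⟩
  have key : ∀ (n : ℕ) (m : Fin (N - 1) → ℕ), (∑ ν, m ν) = n →
      dl (fun ν => r0 ν + (m ν : ZMod p)) ∈ V := by
    intro n
    induction n with
    | zero =>
      intro m hm
      have hm0 : ∀ ν, m ν = 0 := fun ν =>
        (Finset.sum_eq_zero_iff.mp hm) ν (Finset.mem_univ ν)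
      have : (fun ν => r0 ν + (m ν : ZMod p)) = r0 := by
        funext ν; simp [hm0]
      rw [this]; exact h
    | succ n ih =>
      intro m hm
      have hex : ∃ ν, 0 < m ν := by
        by_contra hcon
        push_neg at hcon
        have : ∀ ν, m ν = 0 := fun ν => Nat.le_zero.mp (hcon ν)
        simp [this] at hm
      obtain ⟨ν, hν⟩ := hex
      set m' : Fin (N - 1) → ℕ := Function.update m ν (m ν - 1) with hm'
      have hsum : (∑ μ, m' μ) = n := by
        have h1 : (∑ μ, m μ) = m ν + ∑ μ ∈ Finset.univ.erase ν, m μ :=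
          (Finset.add_sum_erase _ m (Finset.mem_univ ν)).symm
        have h2 : (∑ μ, m' μ) = m' ν + ∑ μ ∈ Finset.univ.erase ν, m' μ :=
          (Finset.add_sum_erase _ m' (Finset.mem_univ ν)).symm
        have h3 : ∑ μ ∈ Finset.univ.erase ν, m' μ = ∑ μ ∈ Finset.univ.erase ν, m μ :=
          Finset.sum_congr rfl fun μ hμ => by
            rw [hm', Function.update_of_ne (Finset.ne_of_mem_erase hμ)]
        have h4 : m' ν = m ν - 1 := by rw [hm', Function.update_self]
        omega
      have hmem := ih m' hsum
      have := dl_shift hv hmem ν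
      have heq : Function.update (fun μ => r0 μ + (m' μ : ZMod p)) ν
          ((r0 ν + (m' ν : ZMod p)) + 1) = fun μ => r0 μ + (m μ : ZMod p) := by
        funext μ
        by_cases hμ : μ = ν
        · subst hμ
          rw [Function.update_self, hm', Function.update_self, add_assoc]
          congr 1
          rw [Nat.cast_sub hν, Nat.cast_one, sub_add_cancel]
        · rw [Function.update_of_ne hμ, hm', Function.update_of_ne hμ]
      rw [heq] at this
      exact this
  intro r1
  have := key (∑ ν, ((r1 ν - r0 ν).val)) (fun ν => (r1 ν - r0 ν).val) rfl
  have heq : (fun ν => r0 ν + (((r1 ν - r0 ν).val : ℕ) : ZMod p)) = r1 := by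
    funext ν
    rw [ZMod.natCast_zmod_val]
    ring
  rwa [heq] at this

/-- Deltas span everything. -/
lemma dl_span {p N : ℕ} [NeZero p] {V : Submodule ℂ (Bsp p N)}
    (h : ∀ r1 : Fin (N - 1) → ZMod p, dl (p := p) (N := N) r1 ∈ V) : V = ⊤ := by
  rw [eq_top_iff]
  intro f _
  have hf : f = ∑ r0 : Fin (N - 1) → ZMod p, f r0 • dl r0 := by
    funext r
    rw [Finset.sum_apply]
    simp only [Pi.smul_apply, smul_eq_mul, dl]
    rw [Finset.sum_eq_single r]
    · simp
    · intro b _ hb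
      rw [if_neg (Ne.symm hb), mul_zero]
    · intro hr; exact absurd (Finset.mem_univ r) hr
  rw [hf]
  exact Submodule.sum_mem _ fun r0 _ => Submodule.smul_mem _ _ (h r0)

/-- An intertwiner of the `gOp`s commutes with multiplication by `q^{∑_{μ∈S} r_μ}`. -/
lemma comm_mul {p N : ℕ} (φ : Bsp p N ≃ₗ[ℂ] Bsp p N)
    (hgc : ∀ ν f, φ (gOp p N ν f) = gOp p N ν (φ f)) :
    ∀ (S : Finset (Fin (N - 1))) (f : Bsp p N),
      φ (fun r => qp p ^ (∑ μ ∈ S, (r μ).val) * f r)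
        = fun r => qp p ^ (∑ μ ∈ S, (r μ).val) * (φ f) r := by
  intro S
  induction S using Finset.induction with
  | empty =>
    intro f
    simp
  | @insert ν S hν ih =>
    intro f
    have h1 : (fun r => qp p ^ (∑ μ ∈ insert ν S, (r μ).val) * f r)
        = gOp p N ν (fun r => qp p ^ (∑ μ ∈ S, (r μ).val) * f r) := by
      funext r
      rw [gOp_apply, Finset.sum_insert hν, pow_add, mul_assoc]
    rw [h1, hgc, ih]
    funext r
    rw [gOp_apply, Finset.sum_insert hν, pow_add, mul_assoc]

/-- Each representation `D^{st}_N` of the lattice `U(1)` current algebra is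
irreducible, and `D^{st}_N`, `D^{s't'}_N` are inequivalent unless
`(s,t) = (s',t')` (for `p` odd). -/
theorem stmt16 (p N : ℕ) (hp : 0 < p) (hodd : Odd p) (hN : 0 < N) :
    -- irreducibility
    (∀ (s t : ZMod p) (V : Submodule ℂ (Bsp p N)),
      (∀ ν, V.map (vOp p N ν) ≤ V) →
      (∀ ν, V.map (gOp p N ν) ≤ V) →
      V.map (g0Op p N s t) ≤ V →
      V.map (cOp p N s) ≤ V →
      V = ⊥ ∨ V = ⊤) ∧
    -- inequivalence unless (s,t) = (s',t')
    (∀ s t s' t' : ZMod p,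
      (∃ φ : Bsp p N ≃ₗ[ℂ] Bsp p N,
        (∀ ν f, φ (vOp p N ν f) = vOp p N ν (φ f)) ∧
        (∀ ν f, φ (gOp p N ν f) = gOp p N ν (φ f)) ∧
        (∀ f, φ (g0Op p N s t f) = g0Op p N s' t' (φ f)) ∧
        (∀ f, φ (cOp p N s f) = cOp p N s' (φ f))) →
      s = s' ∧ t = t') := by
  haveI : NeZero p := ⟨hp.ne'⟩
  constructor
  · -- irreducibility
    intro s t V hv hg _ _
    by_cases hbot : V = ⊥
    · exact Or.inl hbot
    · right
      obtain ⟨f, hfV, hfne⟩ := Submodule.exists_mem_ne_zero_of_ne_bot hbot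
      have hx : ∃ r0, f r0 ≠ 0 := by
        by_contra hcon
        push_neg at hcon
        exact hfne (funext hcon)
      obtain ⟨r0, h0⟩ := hx
      exact dl_span (dl_all hp hv (dl_mem hp hg hfV h0))
  · -- inequivalence
    intro s t s' t' ⟨φ, hvφ, hgφ, h0φ, hcφ⟩
    -- a convenient nonzero vector in the image
    set r1 : Fin (N - 1) → ZMod p := fun _ => 0 with hr1
    set g : Bsp p N := dl r1 with hgdef
    have hg1 : g r1 = 1 := by simp [hgdef, dl]
    set f : Bsp p N := φ.symm g with hfdef
    have hφf : φ f = g := φ.apply_symm_apply g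
    -- s = s'
    have hs : s = s' := by
      have := hcφ f
      rw [cOp, cOp] at this
      simp only [LinearMap.smul_apply, LinearMap.id_apply, map_smul, hφf] at this
      have h2 := congrFun this r1
      simp only [Pi.smul_apply, smul_eq_mul, hg1, mul_one] at h2
      exact qp_pow_val_inj hp h2
    refine ⟨hs, ?_⟩
    -- s + t = s' + t'
    have hst : s + t = s' + t' := by
      have h1 := h0φ f
      have hg0 : ∀ (a b : ZMod p) (h : Bsp p N), g0Op p N a b h
          = (qp p ^ (a.val + b.val)) • (fun r => qp p ^ (∑ μ, (r μ).val) * h r) := by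
        intro a b h
        funext r
        show qp p ^ ((∑ μ, (r μ).val) + a.val + b.val) * h r = _
        simp only [Pi.smul_apply, smul_eq_mul]
        rw [← mul_assoc, ← pow_add]
        congr 1
        ring
      rw [hg0, hg0, map_smul, comm_mul φ hgφ Finset.univ f, hφf] at h1
      have h2 := congrFun h1 r1
      simp only [Pi.smul_apply, smul_eq_mul, hg1, mul_one] at h2
      have hne : qp p ^ (∑ μ : Fin (N - 1), (r1 μ).val) ≠ 0 :=
        pow_ne_zero _ (qp_ne_zero p)
      have h3 : qp p ^ (s.val + t.val) = qp p ^ (s'.val + t'.val) :=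
        mul_right_cancel₀ hne h2
      have h4 : qp p ^ (s + t).val = qp p ^ (s' + t').val := by
        rw [qp_pow_val_add hp, qp_pow_val_add hp, ← pow_add, ← pow_add, h3]
      exact qp_pow_val_inj hp h4
    rw [hs] at hst
    exact add_left_cancel hst
end
end
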